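/- Let H be a complex Hilbert space and let e be a bounded linear idempotent on H (e∘e = e, e continuous). Let V = range(e) and W = ker(e). Then for all unit vectors v ∈ V and w ∈ W one has |⟨v,w⟩| ≤ 1 − 1/(2‖e‖²). In particular the angle between V and W is strictly positive. -/

import Mathlib

local notation "⟪" x ", " y "⟫" => @inner ℂ _ _ x y

/-- Quantitative form of Lemma 4.1 (iii) ⇒ (i): if `e` is a bounded idempotent on a
complex Hilbert space, `V = range e`, `W = ker e`, then for all unit vectors `v ∈ V`,
`w ∈ W` one has `|⟨v,w⟩| ≤ 1 − 1/(2‖e‖²)`; in particular the angle between `V` and `W`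
is strictly positive. -/
theorem idempotent_angle_bound
    {H : Type*} [NormedAddCommGroup H] [InnerProductSpace ℂ H] [CompleteSpace H]
    (e : H →L[ℂ] H) (he : e.comp e = e) :
    ∀ v ∈ LinearMap.range (e : H →ₗ[ℂ] H), ∀ w ∈ LinearMap.ker (e : H →ₗ[ℂ] H), ‖v‖ = 1 → ‖w‖ = 1 →
      ‖⟪v, w⟫‖ ≤ 1 - 1 / (2 * ‖e‖ ^ 2) := by
  intro v hv w hw hvn hwn
  obtain ⟨u, hu⟩ := hv
  have hev : e v = v := by
    have := congrArg (fun f : H →L[ℂ] H => f u) he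
    simpa [show e u = v from hu] using this
  have hew : e w = 0 := hw
  have hne : (1 : ℝ) ≤ ‖e‖ := by
    have h1 : ‖e v‖ ≤ ‖e‖ * ‖v‖ := e.le_opNorm v
    rw [hev, hvn] at h1
    linarith
  set c : ℂ := if h : ⟪v, w⟫ = 0 then 1 else (starRingEnd ℂ) ⟪v, w⟫ / ‖⟪v, w⟫‖
  have hc : ‖c‖ = 1 := by
    by_cases h : ⟪v, w⟫ = 0
    · simp [c, h]
    · have : ‖⟪v, w⟫‖ ≠ 0 := by simpa using h
      rw [show c = (starRingEnd ℂ) ⟪v, w⟫ / ‖⟪v, w⟫‖ from dif_neg h]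
      rw [norm_div, RCLike.norm_conj, Complex.norm_real, Real.norm_eq_abs,
        abs_of_nonneg (norm_nonneg _)]
      exact div_self this
  have hct : c * ⟪v, w⟫ = (‖⟪v, w⟫‖ : ℂ) := by
    by_cases h : ⟪v, w⟫ = 0
    · simp [c, h]
    · have hn : (‖⟪v, w⟫‖ : ℂ) ≠ 0 := by simpa using h
      simp only [c, dif_neg h]
      rw [div_mul_eq_mul_div]
      have : (starRingEnd ℂ) ⟪v, w⟫ * ⟪v, w⟫ = (‖⟪v, w⟫‖ : ℂ) ^ 2 := by
        rw [Complex.conj_mul']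
      rw [this]
      rw [sq, mul_div_assoc]
      field_simp
  set w' : H := c • w with hw'
  have hw'n : ‖w'‖ = 1 := by rw [hw', norm_smul, hc, hwn]; ring
  have hip : RCLike.re ⟪v, w'⟫ = ‖⟪v, w⟫‖ := by
    rw [hw', inner_smul_right, hct]
    simp
  have hsq : ‖v - w'‖ ^ 2 = 2 - 2 * ‖⟪v, w⟫‖ := by
    rw [@norm_sub_sq ℂ, hvn, hw'n, hip]; ring
  have hlow : 1 ≤ ‖e‖ * ‖v - w'‖ := by
    have : e (v - w') = v := by
      simp [hw', map_sub, hev, hew]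
    have h1 : ‖e (v - w')‖ ≤ ‖e‖ * ‖v - w'‖ := e.le_opNorm _
    rw [this, hvn] at h1
    exact h1
  have hepos : (0 : ℝ) < ‖e‖ := lt_of_lt_of_le one_pos hne
  have hdist : 1 / ‖e‖ ≤ ‖v - w'‖ := by
    rw [div_le_iff₀ hepos]
    linarith [hlow]
  have hdsq : 1 / ‖e‖ ^ 2 ≤ ‖v - w'‖ ^ 2 := by
    have h0 : (0 : ℝ) ≤ 1 / ‖e‖ := by positivity
    calc 1 / ‖e‖ ^ 2 = (1 / ‖e‖) ^ 2 := by ring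
      _ ≤ ‖v - w'‖ ^ 2 := by nlinarith [hdist]
  rw [hsq] at hdsq
  have h2 : (0 : ℝ) < ‖e‖ ^ 2 := by positivity
  have heq : 1 / (2 * ‖e‖ ^ 2) = (1 / ‖e‖ ^ 2) / 2 := by ring
  linarith
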